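/- arXiv:1810.09787 — 2 statements merged into one kernel-verified Lean document; each statement's English description precedes it below -/
import Mathlib

section
/- With z(n) = Σ_{j=0}^n t(j) for the infinite tribonacci word t and A, B, C the position sequences of 1, 0, 2, one has z(A(k)) = 2(A(k) − B(k)) − k − 1, z(B(k)) = −A(k) + 3B(k) − k + 1, and z(C(k)) = B(k) + 2k + 3 for all k ≥ 0. -/
set_option maxHeartbeats 1000000
set_option linter.unnecessarySeqFocus false
set_option linter.unreachableTactic false
set_option linter.unusedTactic false

/-- The tribonacci substitution on letters: 0 ↦ 01, 1 ↦ 02, 2 ↦ 0. -/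
def sigmaW : ℕ → List ℕ
  | 0 => [0, 1]
  | 1 => [0, 2]
  | _ => [0]

/-- The substitution extended to words (concatenation homomorphism). -/
def sigmaL (w : List ℕ) : List ℕ := w.flatMap sigmaW

/-- The infinite tribonacci word t = 0,1,0,2,0,1,0,0,1,0,2,...,
the fixed point of the substitution starting from 0. -/
def t (n : ℕ) : ℕ := (sigmaL^[n + 1] [0]).getD n 0

/-- A(n): position of the (n+1)-st occurrence of the letter 1 in t. -/
noncomputable def A (n : ℕ) : ℕ := Nat.nth (fun k => t k = 1) n

/-- B(n): position of the (n+1)-st occurrence of the letter 0 in t. -/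
noncomputable def B (n : ℕ) : ℕ := Nat.nth (fun k => t k = 0) n

/-- C(n): position of the (n+1)-st occurrence of the letter 2 in t. -/
noncomputable def C (n : ℕ) : ℕ := Nat.nth (fun k => t k = 2) n

/-! ### Auxiliary development -/

def W (m : ℕ) : List ℕ := sigmaL^[m] [0]

lemma sigmaL_append (a b : List ℕ) : sigmaL (a ++ b) = sigmaL a ++ sigmaL b :=
  List.flatMap_append

lemma sigmaL_cons (x : ℕ) (w : List ℕ) : sigmaL (x :: w) = sigmaW x ++ sigmaL w := List.flatMap_cons

lemma W_succ (m : ℕ) : W (m + 1) = sigmaL (W m) := Function.iterate_succ_apply' _ _ _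

lemma sigmaW_two (n : ℕ) : sigmaW (n + 2) = [0] := rfl

lemma length_sigmaW (x : ℕ) : 1 ≤ (sigmaW x).length := by
  match x with
  | 0 => simp [sigmaW]
  | 1 => simp [sigmaW]
  | n + 2 => simp [sigmaW_two]

lemma length_le_sigmaL (w : List ℕ) : w.length ≤ (sigmaL w).length := by
  induction w with
  | nil => simp [sigmaL]
  | cons x w ih =>
    rw [sigmaL_cons, List.length_append, List.length_cons]
    have := length_sigmaW x
    omega

lemma W_cons (m : ℕ) : ∃ r, W m = 0 :: r := by
  induction m with
  | zero => exact ⟨[], rfl⟩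
  | succ m ih =>
    obtain ⟨r, hr⟩ := ih
    exact ⟨1 :: sigmaL r, by rw [W_succ, hr, sigmaL_cons]; rfl⟩

lemma length_W (m : ℕ) : m < (W m).length := by
  induction m with
  | zero => simp [W]
  | succ m ih =>
    obtain ⟨r, hr⟩ := W_cons m
    rw [W_succ, hr, sigmaL_cons]
    have := length_le_sigmaL r
    have h2 : (W m).length = r.length + 1 := by rw [hr]; rfl
    simp only [List.length_append]
    have : (sigmaW 0).length = 2 := rfl
    omega

lemma W_prefix_succ (m : ℕ) : W m <+: W (m + 1) := by
  induction m with
  | zero => exact ⟨[1], by simp [W, sigmaL, sigmaW]⟩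
  | succ m ih =>
    obtain ⟨r, hr⟩ := ih
    refine ⟨sigmaL r, ?_⟩
    rw [W_succ, W_succ, ← sigmaL_append, hr]

lemma W_prefix {a b : ℕ} (h : a ≤ b) : W a <+: W b := by
  induction b with
  | zero => rw [Nat.le_zero] at h; subst h; exact List.prefix_refl _
  | succ b ih =>
    rcases Nat.lt_or_ge a (b + 1) with h' | h'
    · exact (ih (by omega)).trans (W_prefix_succ b)
    · have : a = b + 1 := by omega
      subst this; exact List.prefix_refl _

lemma getD_prefix {l l' : List ℕ} (h : l <+: l') {j : ℕ} (hj : j < l.length) :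
    l'.getD j 0 = l.getD j 0 := by
  obtain ⟨r, rfl⟩ := h
  exact List.getD_append l r 0 j hj

lemma t_eq {j m : ℕ} (hj : j < (W m).length) : t j = (W m).getD j 0 := by
  have hdef : t j = (W (j + 1)).getD j 0 := rfl
  rcases Nat.le_total m (j + 1) with h | h
  · rw [hdef, getD_prefix (W_prefix h) hj]
  · rw [hdef, ← getD_prefix (W_prefix h) (by have := length_W (j+1); omega)]

/-- prefix of `t` of length `n` -/
def prefT (n : ℕ) : List ℕ := (List.range n).map t

lemma length_prefT (n : ℕ) : (prefT n).length = n := by simp [prefT]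

lemma prefT_succ (n : ℕ) : prefT (n + 1) = prefT n ++ [t n] := by
  simp [prefT, List.range_succ]

lemma getD_prefT {j n : ℕ} (hj : j < n) : (prefT n).getD j 0 = t j := by
  rw [List.getD_eq_getElem _ _ (by simpa [length_prefT] using hj)]
  simp [prefT]

lemma take_prefT (k n : ℕ) : (prefT n).take k = prefT (min k n) := by
  simp [prefT, ← List.map_take, List.take_range]

lemma prefT_W (m : ℕ) : prefT (W m).length = W m := by
  apply List.ext_getElem (by simp [length_prefT])
  intro i h1 h2
  have : (prefT (W m).length).getD i 0 = (W m).getD i 0 := by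
    rw [getD_prefT (by simpa [length_prefT] using h1)]
    exact t_eq h2
  rwa [List.getD_eq_getElem _ _ h1, List.getD_eq_getElem _ _ h2] at this

/-- position of the start of the n-th block -/
def p (n : ℕ) : ℕ := (sigmaL (prefT n)).length

lemma key (n : ℕ) : sigmaL (prefT n) = prefT (p n) := by
  have hn : n ≤ (W n).length := (length_W n).le
  have h1 : prefT n = (W n).take n := by
    conv_rhs => rw [← prefT_W n]
    rw [take_prefT, min_eq_left hn]
  have h2 : W n = prefT n ++ (W n).drop n := by
    rw [h1]; exact (List.take_append_drop n (W n)).symm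
  have h3 : W (n + 1) = sigmaL (prefT n) ++ sigmaL ((W n).drop n) := by
    rw [W_succ]
    conv_lhs => rw [h2]
    rw [sigmaL_append]
  have h4 : sigmaL (prefT n) = (W (n + 1)).take (p n) := by
    rw [h3]
    show sigmaL (prefT n) = (sigmaL (prefT n) ++ _).take (sigmaL (prefT n)).length
    rw [List.take_left]
  have h5 : p n ≤ (W (n + 1)).length := by
    rw [h3, List.length_append]; exact Nat.le_add_right _ _
  rw [h4]
  conv_lhs => rw [← prefT_W (n + 1)]
  rw [take_prefT, min_eq_left h5]

lemma p_succ (n : ℕ) : p (n + 1) = p n + (sigmaW (t n)).length := by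
  unfold p
  rw [prefT_succ, sigmaL_append, List.length_append]
  simp [sigmaL]

lemma prefT_p_succ (n : ℕ) : prefT (p (n + 1)) = prefT (p n) ++ sigmaW (t n) := by
  rw [← key, prefT_succ, sigmaL_append, key]
  simp [sigmaL]

lemma t_block {n j : ℕ} (hj : j < (sigmaW (t n)).length) :
    t (p n + j) = (sigmaW (t n)).getD j 0 := by
  have h1 : p n + j < p (n + 1) := by rw [p_succ]; omega
  have := getD_prefT h1
  rw [prefT_p_succ] at this
  rw [← this, List.getD_append_right _ _ _ _ (by simp [length_prefT])]
  congr 1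
  simp [length_prefT]

lemma sigmaW_head (x : ℕ) : (sigmaW x).getD 0 0 = 0 := by
  match x with
  | 0 => rfl
  | 1 => rfl
  | n + 2 => rfl

lemma t_p (n : ℕ) : t (p n) = 0 := by
  have h := t_block (n := n) (j := 0) (length_sigmaW _)
  rw [Nat.add_zero] at h
  rw [h, sigmaW_head]

lemma t_p1_of0 {n : ℕ} (h : t n = 0) : t (p n + 1) = 1 := by
  have := t_block (n := n) (j := 1) (by rw [h]; simp [sigmaW])
  rwa [h] at this

lemma t_p1_of1 {n : ℕ} (h : t n = 1) : t (p n + 1) = 2 := by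
  have := t_block (n := n) (j := 1) (by rw [h]; simp [sigmaW])
  rwa [h] at this

lemma p_eq (n : ℕ) : p n = n + (prefT n).count 0 + (prefT n).count 1 := by
  have : ∀ w : List ℕ, (sigmaL w).length = w.length + w.count 0 + w.count 1 := by
    intro w
    induction w with
    | nil => simp [sigmaL]
    | cons x w ih =>
      rw [sigmaL_cons, List.length_append, ih]
      match x with
      | 0 => simp [sigmaW, List.count_cons]; omega
      | 1 => simp [sigmaW, List.count_cons]; omega
      | m + 2 => simp [sigmaW_two, List.count_cons]; omega
  rw [p, this, length_prefT]

lemma count0_sigmaL (w : List ℕ) : (sigmaL w).count 0 = w.length := by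
  induction w with
  | nil => simp [sigmaL]
  | cons x w ih =>
    rw [sigmaL_cons, List.count_append, ih]
    match x with
    | 0 => simp [sigmaW] <;> omega
    | 1 => simp [sigmaW] <;> omega
    | m + 2 => simp [sigmaW_two] <;> omega

lemma count1_sigmaL (w : List ℕ) : (sigmaL w).count 1 = w.count 0 := by
  induction w with
  | nil => simp [sigmaL]
  | cons x w ih =>
    rw [sigmaL_cons, List.count_append, ih]
    match x with
    | 0 => simp [sigmaW, List.count_cons] <;> omega
    | 1 => simp [sigmaW, List.count_cons] <;> omega
    | m + 2 => simp [sigmaW_two, List.count_cons] <;> omega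

lemma count2_sigmaL (w : List ℕ) : (sigmaL w).count 2 = w.count 1 := by
  induction w with
  | nil => simp [sigmaL]
  | cons x w ih =>
    rw [sigmaL_cons, List.count_append, ih]
    match x with
    | 0 => simp [sigmaW, List.count_cons] <;> omega
    | 1 => simp [sigmaW, List.count_cons] <;> omega
    | m + 2 => simp [sigmaW_two, List.count_cons] <;> omega

lemma cnt0_p (n : ℕ) : (prefT (p n)).count 0 = n := by
  rw [← key, count0_sigmaL, length_prefT]

lemma cnt1_p (n : ℕ) : (prefT (p n)).count 1 = (prefT n).count 0 := by
  rw [← key, count1_sigmaL]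

lemma cnt2_p (n : ℕ) : (prefT (p n)).count 2 = (prefT n).count 1 := by
  rw [← key, count2_sigmaL]

lemma cnt_succ (v n : ℕ) :
    (prefT (n + 1)).count v = (prefT n).count v + if t n = v then 1 else 0 := by
  rw [prefT_succ, List.count_append, List.count_singleton']

lemma nat_count_eq (v n : ℕ) :
    Nat.count (fun k => t k = v) n = (prefT n).count v := by
  induction n with
  | zero => rfl
  | succ n ih => rw [Nat.count_succ, cnt_succ, ih]

lemma le_p (n : ℕ) : n ≤ p n := by
  rw [p_eq]; omega

lemma inf0 : {k | t k = 0}.Infinite := by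
  apply Set.infinite_of_forall_exists_gt
  intro a
  exact ⟨p (a + 1), t_p _, lt_of_lt_of_le (Nat.lt_succ_self a) (le_p _)⟩

lemma inf1 : {k | t k = 1}.Infinite := by
  apply Set.infinite_of_forall_exists_gt
  intro a
  obtain ⟨b, hb, hab⟩ := inf0.exists_gt a
  exact ⟨p b + 1, t_p1_of0 hb, by have := le_p b; omega⟩

lemma inf2 : {k | t k = 2}.Infinite := by
  apply Set.infinite_of_forall_exists_gt
  intro a
  obtain ⟨b, hb, hab⟩ := inf1.exists_gt a
  exact ⟨p b + 1, t_p1_of1 hb, by have := le_p b; omega⟩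

lemma t_B (k : ℕ) : t (B k) = 0 := Nat.nth_mem_of_infinite inf0 k
lemma t_A (k : ℕ) : t (A k) = 1 := Nat.nth_mem_of_infinite inf1 k

lemma cnt0_B (k : ℕ) : (prefT (B k)).count 0 = k := by
  rw [← nat_count_eq]; exact Nat.count_nth_of_infinite inf0 k

lemma cnt1_A (k : ℕ) : (prefT (A k)).count 1 = k := by
  rw [← nat_count_eq]; exact Nat.count_nth_of_infinite inf1 k

lemma B_eq (k : ℕ) : B k = p k := by
  have h1 : t (p k) = 0 := t_p k
  have h2 : Nat.count (fun k => t k = 0) (p k) = k := by rw [nat_count_eq, cnt0_p]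
  have := Nat.nth_count (p := fun k => t k = 0) h1
  rw [h2] at this
  exact this

lemma A_eq (k : ℕ) : A k = p (B k) + 1 := by
  have h1 : t (p (B k) + 1) = 1 := t_p1_of0 (t_B k)
  have h2 : Nat.count (fun k => t k = 1) (p (B k) + 1) = k := by
    rw [nat_count_eq, cnt_succ, t_p, cnt1_p, cnt0_B]
    simp
  have := Nat.nth_count (p := fun k => t k = 1) h1
  rw [h2] at this
  exact this

lemma C_eq (k : ℕ) : C k = p (A k) + 1 := by
  have h1 : t (p (A k) + 1) = 2 := t_p1_of1 (t_A k)
  have h2 : Nat.count (fun k => t k = 2) (p (A k) + 1) = k := by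
    rw [nat_count_eq, cnt_succ, t_p, cnt2_p, cnt1_A]
    simp
  have := Nat.nth_count (p := fun k => t k = 2) h1
  rw [h2] at this
  exact this

lemma t_le (n : ℕ) : t n ≤ 2 := by
  have hmem : ∀ m, ∀ x ∈ W m, x ≤ 2 := by
    intro m
    induction m with
    | zero => intro x hx; simp [W] at hx; omega
    | succ m ih =>
      intro x hx
      rw [W_succ] at hx
      simp only [sigmaL, List.mem_flatMap] at hx
      obtain ⟨y, _, hxy⟩ := hx
      match y with
      | 0 => simp [sigmaW] at hxy; omega
      | 1 => simp [sigmaW] at hxy; omega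
      | m + 2 => simp [sigmaW_two] at hxy; omega
  have hn : n < (W (n + 1)).length := by have := length_W (n + 1); omega
  have : t n = (W (n + 1)).getD n 0 := t_eq hn
  rw [this, List.getD_eq_getElem _ _ hn]
  exact hmem (n + 1) _ (List.getElem_mem _)

lemma sum_eq (n : ℕ) :
    (∑ j ∈ Finset.range n, (t j : ℤ)) =
      ((prefT n).count 1 : ℤ) + 2 * (prefT n).count 2 := by
  induction n with
  | zero => simp [prefT]
  | succ n ih =>
    rw [Finset.sum_range_succ, ih, cnt_succ, cnt_succ]
    have h := t_le n
    have : t n = 0 ∨ t n = 1 ∨ t n = 2 := by omega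
    rcases this with h | h | h <;> rw [h] <;> push_cast <;> simp <;> ring

/-- z(A(k)) = 2(A(k) − B(k)) − k − 1, z(B(k)) = −A(k) + 3B(k) − k + 1, and
z(C(k)) = B(k) + 2k + 3, where z(n) = Σ_{j=0}^{n} t(j). -/
theorem z_compositions (k : ℕ) :
    (∑ j ∈ Finset.range (A k + 1), (t j : ℤ)) = 2 * ((A k : ℤ) - B k) - k - 1 ∧
    (∑ j ∈ Finset.range (B k + 1), (t j : ℤ)) = -(A k : ℤ) + 3 * B k - k + 1 ∧
    (∑ j ∈ Finset.range (C k + 1), (t j : ℤ)) = (B k : ℤ) + 2 * k + 3 := by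
  have hB := B_eq k
  have hA := A_eq k
  have hC := C_eq k
  -- counts at B k (inclusive: B k + 1 = p k + 1)
  have h1B : (prefT (B k)).count 1 = (prefT k).count 0 := by rw [hB, cnt1_p]
  have h0B : (prefT (B k)).count 0 = k := cnt0_B k
  have hpk : p k = k + (prefT k).count 0 + (prefT k).count 1 := p_eq k
  have hpB : p (B k) = B k + (prefT (B k)).count 0 + (prefT (B k)).count 1 := p_eq (B k)
  -- z(B k)
  have zB : (∑ j ∈ Finset.range (B k + 1), (t j : ℤ)) =
      ((prefT k).count 0 : ℤ) + 2 * (prefT k).count 1 := by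
    rw [sum_eq, hB, cnt_succ, cnt_succ, t_p, cnt1_p, cnt2_p]
    simp
  -- z(A k): A k + 1 = p (B k) + 2
  have zA : (∑ j ∈ Finset.range (A k + 1), (t j : ℤ)) =
      (k : ℤ) + 1 + 2 * (prefT (B k)).count 1 := by
    have e : A k + 1 = p (B k) + 1 + 1 := by omega
    rw [sum_eq, e, cnt_succ, cnt_succ, cnt_succ, cnt_succ, t_p,
      t_p1_of0 (t_B k), cnt1_p, cnt2_p, h0B]
    simp
  -- z(C k): C k + 1 = p (A k) + 2
  have cnt0A : (prefT (A k)).count 0 = B k + 1 := by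
    rw [hA, cnt_succ, t_p, cnt0_p]
    simp
  have zC : (∑ j ∈ Finset.range (C k + 1), (t j : ℤ)) =
      ((prefT (A k)).count 0 : ℤ) + 2 * (k + 1) := by
    have e : C k + 1 = p (A k) + 1 + 1 := by omega
    rw [sum_eq, e, cnt_succ, cnt_succ, cnt_succ, cnt_succ, t_p,
      t_p1_of1 (t_A k), cnt1_p, cnt2_p, cnt1_A]
    simp
  refine ⟨?_, ?_, ?_⟩
  · rw [zA]; omega
  · rw [zB]; omega
  · rw [zC, cnt0A]; omega
end

section
/- For the tribonacci position sequences A and B (positions of 1 and 0 in the infinite tribonacci word), one has A(A(k)+1) = 2(A(k) + B(k)) + k + 6 and A(A(k)) = A(A(k)+1) − 3 for all k ≥ 0. -/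
namespace TribAux

def Wn (n : ℕ) : List ℕ := sigmaL^[n] [0]

lemma sigmaL_append (u v : List ℕ) : sigmaL (u ++ v) = sigmaL u ++ sigmaL v := by
  simp [sigmaL]

lemma Wn_succ (n : ℕ) : Wn (n + 1) = sigmaL (Wn n) := by
  simp [Wn, Function.iterate_succ_apply']

lemma sigmaL_prefix {u v : List ℕ} (h : u <+: v) : sigmaL u <+: sigmaL v := by
  obtain ⟨r, rfl⟩ := h
  exact ⟨sigmaL r, (sigmaL_append u r).symm⟩

lemma Wn_prefix_succ : ∀ n, Wn n <+: Wn (n + 1)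
  | 0 => ⟨[1], rfl⟩
  | (n + 1) => by
      have h := sigmaL_prefix (Wn_prefix_succ n)
      rw [← Wn_succ, ← Wn_succ] at h
      exact h

lemma Wn_prefix {m n : ℕ} (h : m ≤ n) : Wn m <+: Wn n := by
  induction h with
  | refl => exact List.prefix_refl _
  | step h ih => exact ih.trans (Wn_prefix_succ _)

lemma Wn_cons (n : ℕ) : ∃ r, Wn n = 0 :: r := by
  obtain ⟨r, hr⟩ := Wn_prefix (Nat.zero_le n)
  exact ⟨r, hr.symm⟩

lemma sigmaW_length_pos (a : ℕ) : 1 ≤ (sigmaW a).length := by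
  rcases a with _ | _ | a <;> simp [sigmaW]

lemma sigmaL_length_ge : ∀ w : List ℕ, w.length ≤ (sigmaL w).length := by
  intro w
  induction w with
  | nil => simp [sigmaL]
  | cons a w ih =>
    have h : sigmaL (a :: w) = sigmaW a ++ sigmaL w := by simp [sigmaL]
    have := sigmaW_length_pos a
    simp only [h, List.length_append, List.length_cons]
    omega

lemma Wn_length (n : ℕ) : n + 1 ≤ (Wn n).length := by
  induction n with
  | zero => simp [Wn]
  | succ n ih =>
    obtain ⟨r, hr⟩ := Wn_cons n
    have h : Wn (n + 1) = [0, 1] ++ sigmaL r := by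
      rw [Wn_succ, hr]
      simp [sigmaL, sigmaW]
    have h2 := sigmaL_length_ge r
    have h3 : (Wn n).length = r.length + 1 := by rw [hr]; simp
    simp only [h, List.length_append]
    simp at h3 ⊢
    omega

lemma getD_of_prefix {u v : List ℕ} (h : u <+: v) {n : ℕ} (hn : n < u.length) :
    v.getD n 0 = u.getD n 0 := by
  obtain ⟨r, rfl⟩ := h
  exact List.getD_append _ _ _ _ hn

lemma t_eq {n m : ℕ} (h : n < (Wn m).length) : t n = (Wn m).getD n 0 := by
  have ht : t n = (Wn (n + 1)).getD n 0 := rfl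
  have hn1 : n < (Wn (n + 1)).length := lt_of_lt_of_le (Nat.lt_succ_self n) (by
    have := Wn_length (n + 1); omega)
  rcases le_total (n + 1) m with hm | hm
  · rw [ht, getD_of_prefix (Wn_prefix hm) hn1]
  · rw [ht, getD_of_prefix (Wn_prefix hm) h]

def T (n : ℕ) : List ℕ := (List.range n).map t

lemma T_length (n : ℕ) : (T n).length = n := by simp [T]

lemma T_getD {n i : ℕ} (h : i < n) : (T n).getD i 0 = t i := by
  rw [List.getD_eq_getElem _ _ (by simpa [T] using h)]
  simp [T]

lemma T_succ (n : ℕ) : T (n + 1) = T n ++ [t n] := by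
  simp [T, List.range_succ]

lemma T_eq_take {n m : ℕ} (h : n ≤ (Wn m).length) : T n = (Wn m).take n := by
  apply List.ext_getElem
  · simp [T]; omega
  · intro i h1 h2
    simp only [T, List.getElem_map, List.getElem_range, List.getElem_take]
    have hi : i < n := by simpa [T] using h1
    have hilen : i < (Wn m).length := by omega
    rw [t_eq hilen, List.getD_eq_getElem _ _ hilen]

def sN : ℕ → ℕ
  | 0 => 0
  | n + 1 => sN n + (sigmaW (t n)).length

lemma sigmaL_T_length (n : ℕ) : (sigmaL (T n)).length = sN n := by
  induction n with
  | zero => simp [T, sigmaL, sN]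
  | succ n ih =>
    rw [T_succ, sigmaL_append, List.length_append, ih]
    have : sigmaL [t n] = sigmaW (t n) := by simp [sigmaL]
    rw [this, sN]

lemma sigmaL_T (n : ℕ) : sigmaL (T n) = T (sN n) := by
  have h1 : T n = (Wn n).take n := T_eq_take (by have := Wn_length n; omega)
  have h2 : Wn (n + 1) = sigmaL (T n) ++ sigmaL ((Wn n).drop n) := by
    rw [Wn_succ, ← sigmaL_append, h1, List.take_append_drop]
  have hpre : sigmaL (T n) <+: Wn (n + 1) := ⟨_, h2.symm⟩
  have hlen : sN n ≤ (Wn (n + 1)).length := by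
    rw [← sigmaL_T_length]; exact hpre.length_le
  have h3 : T (sN n) = (Wn (n + 1)).take (sN n) := T_eq_take hlen
  have h4 := List.prefix_iff_eq_take.mp hpre
  rw [sigmaL_T_length] at h4
  rw [h3, ← h4]

lemma block (n : ℕ) : T (sN (n + 1)) = T (sN n) ++ sigmaW (t n) := by
  rw [← sigmaL_T, ← sigmaL_T, T_succ, sigmaL_append]
  congr 1
  simp [sigmaL]

lemma mem_sigmaW {a x : ℕ} (h : x ∈ sigmaW a) : x ≤ 2 := by
  rcases a with _ | _ | a <;> simp [sigmaW] at h <;> omega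

lemma mem_Wn : ∀ m, ∀ x ∈ Wn m, x ≤ 2 := by
  intro m
  induction m with
  | zero => intro x hx; simp [Wn] at hx; omega
  | succ m ih =>
    intro x hx
    rw [Wn_succ] at hx
    simp only [sigmaL, List.mem_flatMap] at hx
    obtain ⟨a, _, hx⟩ := hx
    exact mem_sigmaW hx

lemma t_le (n : ℕ) : t n ≤ 2 := by
  have h : n < (Wn (n + 1)).length := by have := Wn_length (n + 1); omega
  rw [t_eq h, List.getD_eq_getElem _ _ h]
  exact mem_Wn _ _ (List.getElem_mem h)

lemma t_block {n i : ℕ} (hi : i < (sigmaW (t n)).length) :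
    t (sN n + i) = (sigmaW (t n)).getD i 0 := by
  have hlt : sN n + i < sN (n + 1) := by rw [sN]; omega
  have h1 : t (sN n + i) = (T (sN (n + 1))).getD (sN n + i) 0 := (T_getD hlt).symm
  rw [block n] at h1
  rw [h1, List.getD_append_right _ _ _ _ (by simp [T])]
  simp [T_length]

lemma sigmaW_getD0 (a : ℕ) : (sigmaW a).getD 0 0 = 0 := by
  rcases a with _ | _ | a <;> rfl

lemma t_sN (n : ℕ) : t (sN n) = 0 := by
  have := t_block (n := n) (i := 0) (sigmaW_length_pos (t n))
  rw [Nat.add_zero, sigmaW_getD0] at this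
  exact this

lemma step0 {n : ℕ} (h : t n = 0) : sN (n + 1) = sN n + 2 ∧ t (sN n + 1) = 1 := by
  constructor
  · rw [sN, h]; rfl
  · have := t_block (n := n) (i := 1) (by rw [h]; simp [sigmaW])
    rw [h] at this
    simpa [sigmaW] using this

lemma step1 {n : ℕ} (h : t n = 1) : sN (n + 1) = sN n + 2 ∧ t (sN n + 1) = 2 := by
  constructor
  · rw [sN, h]; rfl
  · have := t_block (n := n) (i := 1) (by rw [h]; simp [sigmaW])
    rw [h] at this
    simpa [sigmaW] using this

lemma step2 {n : ℕ} (h : t n = 2) : sN (n + 1) = sN n + 1 := by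
  rw [sN, h]; rfl

lemma sN_lt_succ (n : ℕ) : sN n < sN (n + 1) := by
  have := sigmaW_length_pos (t n)
  rw [sN]; omega

lemma sN_cover (p : ℕ) : ∃ n, sN n ≤ p ∧ p < sN (n + 1) := by
  induction p with
  | zero => exact ⟨0, le_refl _, sN_lt_succ 0⟩
  | succ p ih =>
    obtain ⟨n, h1, h2⟩ := ih
    rcases Nat.lt_or_ge (p + 1) (sN (n + 1)) with h | h
    · exact ⟨n, by omega, h⟩
    · exact ⟨n + 1, h, by have := sN_lt_succ (n + 1); omega⟩

lemma eq_sN_of_t_zero {p : ℕ} (h : t p = 0) : ∃ n, sN n = p := by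
  obtain ⟨n, h1, h2⟩ := sN_cover p
  rcases eq_or_lt_of_le h1 with he | hl
  · exact ⟨n, he⟩
  · exfalso
    have hle := t_le n
    have h3 : t n = 0 ∨ t n = 1 ∨ t n = 2 := by omega
    rcases h3 with h3 | h3 | h3
    · obtain ⟨hs, ht⟩ := step0 h3
      have : p = sN n + 1 := by omega
      rw [this, ht] at h; omega
    · obtain ⟨hs, ht⟩ := step1 h3
      have : p = sN n + 1 := by omega
      rw [this, ht] at h; omega
    · have hs := step2 h3; omega

lemma c0_sN : ∀ n, Nat.count (fun k => t k = 0) (sN n) = n := by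
  intro n
  induction n with
  | zero => simp [sN]
  | succ n ih =>
    have h0 := t_sN n
    have hle := t_le n
    have h3 : t n = 0 ∨ t n = 1 ∨ t n = 2 := by omega
    rcases h3 with h3 | h3 | h3
    · obtain ⟨hs, ht⟩ := step0 h3
      rw [hs, show sN n + 2 = (sN n + 1) + 1 from rfl, Nat.count_succ, Nat.count_succ]
      simp [h0, ht, ih]
    · obtain ⟨hs, ht⟩ := step1 h3
      rw [hs, show sN n + 2 = (sN n + 1) + 1 from rfl, Nat.count_succ, Nat.count_succ]
      simp [h0, ht, ih]
    · rw [step2 h3, Nat.count_succ]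
      simp [h0, ih]

lemma c1_sN : ∀ n, Nat.count (fun k => t k = 1) (sN n) =
    Nat.count (fun k => t k = 0) n := by
  intro n
  induction n with
  | zero => simp [sN]
  | succ n ih =>
    have h0 := t_sN n
    have hle := t_le n
    have h3 : t n = 0 ∨ t n = 1 ∨ t n = 2 := by omega
    rcases h3 with h3 | h3 | h3
    · obtain ⟨hs, ht⟩ := step0 h3
      rw [hs, show sN n + 2 = (sN n + 1) + 1 from rfl, Nat.count_succ, Nat.count_succ,
        Nat.count_succ]
      simp [h0, ht, ih, h3]
    · obtain ⟨hs, ht⟩ := step1 h3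
      rw [hs, show sN n + 2 = (sN n + 1) + 1 from rfl, Nat.count_succ, Nat.count_succ,
        Nat.count_succ]
      simp [h0, ht, ih, h3]
    · rw [step2 h3, Nat.count_succ, Nat.count_succ]
      simp [h0, ih, h3]

lemma sN_eq (n : ℕ) : sN n = n + Nat.count (fun k => t k = 0) n +
    Nat.count (fun k => t k = 1) n := by
  induction n with
  | zero => simp [sN]
  | succ n ih =>
    have hle := t_le n
    have h3 : t n = 0 ∨ t n = 1 ∨ t n = 2 := by omega
    rw [sN, Nat.count_succ, Nat.count_succ]
    rcases h3 with h3 | h3 | h3 <;> simp [h3, sigmaW, ih] <;> omega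

lemma B_eq (n : ℕ) : B n = sN n := by
  have h0 : t (sN n) = 0 := t_sN n
  have h := Nat.nth_count (p := fun k => t k = 0) h0
  rw [c0_sN n] at h
  exact h

lemma A_eq (k : ℕ) : A k = sN (sN k) + 1 := by
  have h1 : t (sN (sN k) + 1) = 1 := (step0 (t_sN k)).2
  have hc : Nat.count (fun k => t k = 1) (sN (sN k) + 1) = k := by
    rw [Nat.count_succ]
    simp [t_sN (sN k), c1_sN, c0_sN]
  have h := Nat.nth_count (p := fun k => t k = 1) h1
  rw [hc] at h
  exact h

end TribAux

open TribAux in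
/-- A(A(k)+1) = 2(A(k) + B(k)) + k + 6 and A(A(k)) = A(A(k)+1) − 3. -/
theorem A_comp_A (k : ℕ) :
    A (A k + 1) = 2 * (A k + B k) + k + 6 ∧ A (A k) = A (A k + 1) - 3 := by
  have hak : A k = sN (sN k) + 1 := A_eq k
  have hbk : B k = sN k := B_eq k
  have hta : t (A k) = 1 := by rw [hak]; exact (step0 (t_sN k)).2
  -- counts at A k
  have h0a : Nat.count (fun j => t j = 0) (A k) = B k + 1 := by
    rw [hak, Nat.count_succ]
    simp [t_sN (sN k), c0_sN, hbk]
  have h1a : Nat.count (fun j => t j = 1) (A k) = k := by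
    rw [hak, Nat.count_succ]
    simp [t_sN (sN k), c1_sN, c0_sN]
  have h0a1 : Nat.count (fun j => t j = 0) (A k + 1) = B k + 1 := by
    rw [Nat.count_succ, h0a]
    simp [hta]
  have h1a1 : Nat.count (fun j => t j = 1) (A k + 1) = k + 1 := by
    rw [Nat.count_succ, h1a]
    simp [hta]
  -- sN at A k and A k + 1
  have hsA : sN (A k) = A k + (B k + 1) + k := by
    rw [sN_eq (A k), h0a, h1a]
  have hsA1 : sN (A k + 1) = (A k + 1) + (B k + 1) + (k + 1) := by
    rw [sN_eq (A k + 1), h0a1, h1a1]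
  -- A (A k) and A (A k + 1)
  have e1 : A (A k + 1) = sN (sN (A k + 1)) + 1 := A_eq _
  have e2 : sN (sN (A k + 1)) = sN (A k + 1) + (A k + 1) + (B k + 1) := by
    rw [sN_eq (sN (A k + 1)), c0_sN, c1_sN, h0a1]
  have e3 : A (A k) = sN (sN (A k)) + 1 := A_eq _
  have e4 : sN (sN (A k)) = sN (A k) + A k + (B k + 1) := by
    rw [sN_eq (sN (A k)), c0_sN, c1_sN, h0a]
  constructor
  · omega
  · omega
end
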